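/- For a prime p > 5 and 1 ≤ a ≤ 4, with C_a = C(2p-a+4, 4) - 5·C(p-a+4, 4), one has the integer congruences 4·C_2 ≡ p, 4·C_3 ≡ -p, and 4·C_4 ≡ 3p, all modulo p². -/

import Mathlib

lemma key24 (n : ℕ) : ((n+4).choose 4 : ℤ) * 24 = ((n:ℤ)+4)*((n:ℤ)+3)*((n:ℤ)+2)*((n:ℤ)+1) := by
  have h : (n+4).choose 4 * 24 = (n+4)*(n+3)*(n+2)*(n+1) := by
    rw [Nat.choose_eq_descFactorial_div_factorial,
      show Nat.factorial 4 = 24 from rfl,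
      Nat.div_mul_cancel (by simpa [show Nat.factorial 4 = 24 from rfl] using Nat.factorial_dvd_descFactorial (n+4) 4)]
    simp [Nat.descFactorial]
    ring
  have h2 := congrArg (fun x : ℕ => (x : ℤ)) h
  push_cast at h2
  linarith

theorem stmt2 (p : ℕ) (hp : p.Prime) (hp5 : 5 < p) :
    (4 * ((Nat.choose (2 * p - 2 + 4) 4 : ℤ) - 5 * Nat.choose (p - 2 + 4) 4) ≡ (p : ℤ) [ZMOD (p : ℤ) ^ 2]) ∧
    (4 * ((Nat.choose (2 * p - 3 + 4) 4 : ℤ) - 5 * Nat.choose (p - 3 + 4) 4) ≡ -(p : ℤ) [ZMOD (p : ℤ) ^ 2]) ∧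
    (4 * ((Nat.choose (2 * p - 4 + 4) 4 : ℤ) - 5 * Nat.choose (p - 4 + 4) 4) ≡ 3 * (p : ℤ) [ZMOD (p : ℤ) ^ 2]) := by
  have h6 : ¬ (p ∣ 6) := by
    intro h
    have := Nat.le_of_dvd (by norm_num) h
    have hq : p = 6 := by omega
    rw [hq] at hp
    exact absurd hp (by norm_num)
  have hcop : IsCoprime ((p:ℤ)^2) (6:ℤ) := by
    have := (Nat.isCoprime_iff_coprime).mpr (Nat.Coprime.pow_left 2 ((hp.coprime_iff_not_dvd).mpr h6))
    push_cast at this; exact this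
  obtain ⟨n, rfl⟩ : ∃ n, p = n + 6 := ⟨p - 6, by omega⟩
  simp only [show 2*(n+6)-2+4 = (2*n+10)+4 from by omega,
    show (n+6)-2+4 = (n+4)+4 from by omega,
    show 2*(n+6)-3+4 = (2*n+9)+4 from by omega,
    show (n+6)-3+4 = (n+3)+4 from by omega,
    show 2*(n+6)-4+4 = (2*n+8)+4 from by omega,
    show (n+6)-4+4 = (n+2)+4 from by omega]
  have ha1 := key24 (2*n+10)
  have hb1 := key24 (n+4)
  have ha2 := key24 (2*n+9)
  have hb2 := key24 (n+3)
  have ha3 := key24 (2*n+8)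
  have hb3 := key24 (n+2)
  push_cast at ha1 hb1 ha2 hb2 ha3 hb3
  refine ⟨?_, ?_, ?_⟩
  · refine Int.modEq_iff_dvd.mpr (hcop.dvd_of_dvd_mul_right
      ⟨-(11*((n:ℤ)+6)^2+6*((n:ℤ)+6)+1), ?_⟩)
    push_cast
    linear_combination (-1)*ha1 + 5*hb1
  · refine Int.modEq_iff_dvd.mpr (hcop.dvd_of_dvd_mul_right
      ⟨-(11*((n:ℤ)+6)^2-6*((n:ℤ)+6)+1), ?_⟩)
    push_cast
    linear_combination (-1)*ha2 + 5*hb2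
  · refine Int.modEq_iff_dvd.mpr (hcop.dvd_of_dvd_mul_right
      ⟨-(11*((n:ℤ)+6)^2-18*((n:ℤ)+6)-11), ?_⟩)
    push_cast
    linear_combination (-1)*ha3 + 5*hb3
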